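/- (Filtration Lemma) Let Φ be a set of pairs (m,n) with n > m > 1 and let φ be a modal formula. If φ is satisfied at the root r of a model (W,R,V) rooted at r which satisfies condition (1): ∀x,y (x R y → ∃y' (x R y' ∧ d_r(y') = d_r(x)+1 ∧ y' ∼ y)), and condition (2): for each (m,n) ∈ Φ, ∀x,z (x R^m z → ∃ w_1,…,w_{n−1} with x R w_1 R ⋯ R w_{n−1} R z and d_r(w_j) = d_r(x)+j for each j), then φ is satisfiable in a model whose frame is a finite Φ-frame. -/

import Mathlib

/-- Modal formulas: ⊥, propositional variables, ¬, ∨, ◇. -/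
inductive ModalFormula : Type
  | bot : ModalFormula
  | var : ℕ → ModalFormula
  | neg : ModalFormula → ModalFormula
  | or : ModalFormula → ModalFormula → ModalFormula
  | dia : ModalFormula → ModalFormula

namespace ModalFormula

/-- Modal depth: maximal nesting of ◇. -/
def md : ModalFormula → ℕ
  | bot => 0
  | var _ => 0
  | neg φ => md φ
  | or φ ψ => max (md φ) (md ψ)
  | dia φ => md φ + 1

/-- The set of propositional variables occurring in a formula. -/
def vars : ModalFormula → Set ℕ
  | bot => ∅
  | var p => {p}
  | neg φ => vars φ
  | or φ ψ => vars φ ∪ vars ψ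
  | dia φ => vars φ

/-- The set of subformulas of a formula (including the formula itself). -/
def subformulas : ModalFormula → Set ModalFormula
  | bot => {bot}
  | var p => {var p}
  | neg φ => insert (neg φ) (subformulas φ)
  | or φ ψ => insert (or φ ψ) (subformulas φ ∪ subformulas ψ)
  | dia φ => insert (dia φ) (subformulas φ)

end ModalFormula

/-- Standard Kripke satisfaction for a model given by a relation `R` and a valuation `V`. -/
def Sat {W : Type*} (R : W → W → Prop) (V : ℕ → Set W) : W → ModalFormula → Prop
  | _, .bot => False
  | w, .var p => w ∈ V p
  | w, .neg φ => ¬ Sat R V w φ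
  | w, .or φ ψ => Sat R V w φ ∨ Sat R V w ψ
  | w, .dia φ => ∃ v, R w v ∧ Sat R V v φ

/-- The `k`-step relation: `relPow R 0` is the identity, `relPow R (k+1) = relPow R k ∘ R`. -/
def relPow {W : Type*} (R : W → W → Prop) : ℕ → W → W → Prop
  | 0, x, y => x = y
  | k + 1, x, y => ∃ u, relPow R k x u ∧ R u y

/-- A frame is a `Φ`-frame if for every `(m,n) ∈ Φ`, `x R^m y` implies `x R^n y`. -/
def PhiFrame {W : Type*} (R : W → W → Prop) (Φ : Set (ℕ × ℕ)) : Prop :=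
  ∀ mn ∈ Φ, ∀ x y : W, relPow R mn.1 x y → relPow R mn.2 x y

/-- A pointed frame is rooted at `r` if every world is reachable from `r` in some number of steps. -/
def Rooted {W : Type*} (R : W → W → Prop) (r : W) : Prop :=
  ∀ w : W, ∃ k, relPow R k r w

/-- The depth of `w` w.r.t. `r`: the least `k` with `r R^k w`. -/
noncomputable def depth {W : Type*} (R : W → W → Prop) (r w : W) : ℕ :=
  sInf {k | relPow R k r w}

/-- `f` is a pointed p-morphism from `(W',R',r')` to `(W,R,r)`. -/
def IsPMorphism {W' W : Type*} (R' : W' → W' → Prop) (r' : W')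
    (R : W → W → Prop) (r : W) (f : W' → W) : Prop :=
  f r' = r ∧ (∀ x y, R' x y → R (f x) (f y)) ∧
    (∀ x y', R (f x) y' → ∃ y, R' x y ∧ f y = y')

/-- Bisimilarity of `x` (in model `(R,V)`) and `x'` (in model `(R',V')`). -/
def Bisim {W W' : Type*} (R : W → W → Prop) (V : ℕ → Set W)
    (R' : W' → W' → Prop) (V' : ℕ → Set W') (x : W) (x' : W') : Prop :=
  ∃ Z : W → W' → Prop, Z x x' ∧ ∀ w w', Z w w' →
    (∀ p, w ∈ V p ↔ w' ∈ V' p) ∧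
    (∀ v, R w v → ∃ v', R' w' v' ∧ Z v v') ∧
    (∀ v', R' w' v' → ∃ v, R w v ∧ Z v v')

/-- `k`-bisimilarity w.r.t. the set `X` of propositional variables. -/
def kBisim {W W' : Type*} (R : W → W → Prop) (V : ℕ → Set W)
    (R' : W' → W' → Prop) (V' : ℕ → Set W') (X : Set ℕ) :
    ℕ → W → W' → Prop
  | 0, w, w' => ∀ p ∈ X, (w ∈ V p ↔ w' ∈ V' p)
  | k + 1, w, w' => (∀ p ∈ X, (w ∈ V p ↔ w' ∈ V' p)) ∧
      (∀ v, R w v → ∃ v', R' w' v' ∧ kBisim R V R' V' X k v v') ∧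
      (∀ v', R' w' v' → ∃ v, R w v ∧ kBisim R V R' V' X k v v')

/-- `DepthPath R dep n x z` says there is an `n`-step `R`-path
`x R w₁ R ⋯ R w_{n-1} R z` whose intermediate points satisfy `dep (w_j) = dep x + j`. -/
def DepthPath {W : Type*} (R : W → W → Prop) (dep : W → ℕ) (n : ℕ) (x z : W) : Prop :=
  ∃ w : ℕ → W, w 0 = x ∧ w n = z ∧ (∀ j < n, R (w j) (w (j + 1))) ∧
    ∀ j, 0 < j → j < n → dep (w j) = dep x + j

namespace FMPAux

lemma relPow_of_path {α : Type*} (R' : α → α → Prop) :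
    ∀ (n : ℕ) (w : ℕ → α), (∀ j < n, R' (w j) (w (j+1))) → relPow R' n (w 0) (w n)
  | 0, w, _ => rfl
  | (n+1), w, h =>
      ⟨w n, relPow_of_path R' n w (fun j hj => h j (by omega)), h n (by omega)⟩

lemma path_of_relPow {α : Type*} (R' : α → α → Prop) :
    ∀ (m : ℕ) (x y : α), relPow R' m x y →
      ∃ c : ℕ → α, c 0 = x ∧ c m = y ∧ ∀ j < m, R' (c j) (c (j+1)) := by
  intro m
  induction m with
  | zero =>
      intro x y h
      exact ⟨fun _ => x, rfl, h ▸ rfl, fun j hj => absurd hj (by omega)⟩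
  | succ m ih =>
      rintro x y ⟨u, hu, huy⟩
      obtain ⟨c, hc0, hcm, hce⟩ := ih x u hu
      refine ⟨fun j => if j ≤ m then c j else y, by simpa using hc0, by simp, ?_⟩
      intro j hj
      by_cases hjm : j < m
      · simpa [Nat.le_of_lt hjm, Nat.succ_le_of_lt hjm] using hce j hjm
      · have hj' : j = m := by omega
        subst hj'
        simpa [hcm] using huy

lemma relPow_pad {α : Type*} {R' : α → α → Prop} {c : ℕ → α} {m n i : ℕ}
    (him : i ≤ m) (hmn : m ≤ n)
    (hedge : ∀ j < m, R' (c j) (c (j+1))) (hloop : R' (c i) (c i)) :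
    relPow R' n (c 0) (c m) := by
  set d := n - m with hd
  set p : ℕ → α := fun j => if j < i then c j else if j < i + d then c i else c (j - d) with hp
  have hp0 : p 0 = c 0 := by
    by_cases h0 : 0 < i
    · simp [hp, h0]
    · have : i = 0 := by omega
      subst this
      by_cases h1 : 0 < d <;> simp [hp, h1]
  have hpn : p n = c m := by
    have h1 : ¬ n < i := by omega
    have h2 : ¬ n < i + d := by omega
    have h3 : n - d = m := by omega
    simp [hp, h1, h2, h3]
  have hpe : ∀ j < n, R' (p j) (p (j+1)) := by
    intro j hj
    by_cases hji : j < i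
    · have hpj : p j = c j := by simp [hp, hji]
      by_cases hji1 : j + 1 < i
      · have : p (j+1) = c (j+1) := by simp [hp, hji1]
        rw [hpj, this]; exact hedge j (by omega)
      · have hji1' : j + 1 = i := by omega
        by_cases hd1 : j + 1 < i + d
        · have : p (j+1) = c i := by simp [hp, hji1, hd1]
          rw [hpj, this, ← hji1']; exact hedge j (by omega)
        · have hd0 : d = 0 := by omega
          have : p (j+1) = c (j+1) := by
            simp [hp, hji1, hd1, hd0]
          rw [hpj, this]; exact hedge j (by omega)
    · by_cases hjd : j < i + d
      · have hpj : p j = c i := by simp [hp, hji, hjd]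
        have h1 : ¬ j + 1 < i := by omega
        by_cases hjd1 : j + 1 < i + d
        · have : p (j+1) = c i := by simp [hp, h1, hjd1]
          rw [hpj, this]; exact hloop
        · have heq : j + 1 - d = i := by omega
          have : p (j+1) = c i := by
            simp [hp, h1, hjd1, heq]
          rw [hpj, this]; exact hloop
      · have hpj : p j = c (j - d) := by simp [hp, hji, hjd]
        have h1 : ¬ j + 1 < i := by omega
        have h2 : ¬ j + 1 < i + d := by omega
        have h3 : j + 1 - d = (j - d) + 1 := by omega
        have : p (j+1) = c ((j - d) + 1) := by simp [hp, h1, h2, h3]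
        rw [hpj, this]
        exact hedge (j - d) (by omega)
  have := relPow_of_path R' n p hpe
  rwa [hp0, hpn] at this


/-- Max variable. -/
def mv : ModalFormula → ℕ
  | .bot => 0
  | .var p => p
  | .neg φ => mv φ
  | .or φ ψ => max (mv φ) (mv ψ)
  | .dia φ => mv φ

lemma mv_lt (φ : ModalFormula) : ∀ p ∈ φ.vars, p < mv φ + 1 := by
  induction φ with
  | bot => intro p hp; simp [ModalFormula.vars] at hp
  | var q => intro p hp; simp [ModalFormula.vars] at hp; simp [hp, mv]
  | neg φ ih => intro p hp; exact ih p hp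
  | or φ ψ ih1 ih2 =>
      intro p hp
      rcases hp with hp | hp
      · have := ih1 p hp; simp [mv]; omega
      · have := ih2 p hp; simp [mv]; omega
  | dia φ ih => intro p hp; exact ih p hp

def Ty (Bd : ℕ) : ℕ → Type
  | 0 => Fin Bd → Prop
  | k+1 => (Fin Bd → Prop) × (Ty Bd k → Prop)

instance tyFinite (Bd : ℕ) : ∀ k, Finite (Ty Bd k)
  | 0 => by unfold Ty; infer_instance
  | (k+1) => by unfold Ty; have := tyFinite Bd k; infer_instance

variable {W : Type*} (R : W → W → Prop) (V : ℕ → Set W) (Bd : ℕ)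

/-- The level-`k` type of a world. -/
def ty : (k : ℕ) → W → Ty Bd k
  | 0, w => fun p => w ∈ V p
  | (k+1), w => ⟨fun p => w ∈ V p, fun σ => ∃ v, R w v ∧ ty k v = σ⟩

def tyBase : ∀ k, Ty Bd k → (Fin Bd → Prop)
  | 0, τ => τ
  | (_+1), τ => τ.1

lemma tyBase_ty (k : ℕ) (w : W) (q : Fin Bd) : tyBase Bd k (ty R V Bd k w) q ↔ w ∈ V q := by
  cases k <;> rfl

noncomputable def proj : (k : ℕ) → Ty Bd (k+1) → Ty Bd k
  | 0, τ => τ.1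
  | (k+1), τ => ⟨τ.1, fun σ => ∃ σ', τ.2 σ' ∧ proj k σ' = σ⟩

lemma proj_ty : ∀ (k : ℕ) (w : W), proj Bd k (ty R V Bd (k+1) w) = ty R V Bd k w := by
  intro k
  induction k with
  | zero => intro w; rfl
  | succ k ih =>
      intro w
      show (⟨_, fun σ => ∃ σ', (ty R V Bd (k+2) w).2 σ' ∧ proj Bd k σ' = σ⟩ : Ty Bd (k+1)) = _
      show (⟨fun p => w ∈ V p, fun σ => ∃ σ', (∃ v, R w v ∧ ty R V Bd (k+1) v = σ') ∧ proj Bd k σ' = σ⟩ : (Fin Bd → Prop) × (Ty Bd k → Prop)) = ⟨fun p => w ∈ V p, fun σ => ∃ v, R w v ∧ ty R V Bd k v = σ⟩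
      congr 1
      funext σ
      apply propext
      constructor
      · rintro ⟨σ', ⟨v, hv, rfl⟩, rfl⟩
        exact ⟨v, hv, (ih v).symm⟩
      · rintro ⟨v, hv, hσ⟩
        exact ⟨ty R V Bd (k+1) v, ⟨v, hv, rfl⟩, by rw [ih v]; exact hσ⟩

lemma ty_step {k : ℕ} {a b : W} (h : ty R V Bd (k+1) a = ty R V Bd (k+1) b) :
    ty R V Bd k a = ty R V Bd k b := by
  rw [← proj_ty R V Bd k a, ← proj_ty R V Bd k b, h]

lemma ty_mono {j k : ℕ} (hjk : j ≤ k) {a b : W} (h : ty R V Bd k a = ty R V Bd k b) :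
    ty R V Bd j a = ty R V Bd j b := by
  induction k with
  | zero => rcases Nat.le_zero.mp hjk; exact h
  | succ k ih =>
      rcases Nat.lt_succ_iff_lt_or_eq.mp (Nat.lt_succ_of_le hjk) with h' | h'
      · exact ih (by omega) (ty_step R V Bd h)
      · subst h'; exact h

lemma ty_transfer {k : ℕ} {a b y : W} (h : ty R V Bd (k+1) a = ty R V Bd (k+1) b)
    (hay : R a y) : ∃ u, R b u ∧ ty R V Bd k u = ty R V Bd k y := by
  have h2 : (ty R V Bd (k+1) a).2 = (ty R V Bd (k+1) b).2 := by rw [h]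
  have h3 : (ty R V Bd (k+1) a).2 (ty R V Bd k y) := ⟨y, hay, rfl⟩
  rw [h2] at h3
  exact h3

lemma typeSat (ψ : ModalFormula) (hv : ∀ p ∈ ψ.vars, p < Bd) :
    ∀ (k : ℕ), ψ.md ≤ k → ∀ a b : W, ty R V Bd k a = ty R V Bd k b →
      (Sat R V a ψ ↔ Sat R V b ψ) := by
  induction ψ with
  | bot => intro k _ a b _; simp [Sat]
  | var p =>
      intro k _ a b h
      have hp : p < Bd := hv p (by simp [ModalFormula.vars])
      have heq : tyBase Bd k (ty R V Bd k a) ⟨p, hp⟩ ↔ tyBase Bd k (ty R V Bd k b) ⟨p, hp⟩ :=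
        iff_of_eq (congrArg (fun τ => tyBase Bd k τ ⟨p, hp⟩) h)
      have ha := tyBase_ty R V Bd k a ⟨p, hp⟩
      have hb := tyBase_ty R V Bd k b ⟨p, hp⟩
      simp only [Sat]
      exact (ha.symm.trans heq).trans hb
  | neg ψ ih =>
      intro k hk a b h
      simp only [Sat]
      rw [ih hv k hk a b h]
  | or ψ1 ψ2 ih1 ih2 =>
      intro k hk a b h
      have h1 : ψ1.md ≤ k := le_trans (le_max_left _ _) hk
      have h2 : ψ2.md ≤ k := le_trans (le_max_right _ _) hk
      simp only [Sat]
      rw [ih1 (fun p hp => hv p (Or.inl hp)) k h1 a b h,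
          ih2 (fun p hp => hv p (Or.inr hp)) k h2 a b h]
  | dia ψ ih =>
      intro k hk a b h
      match k, hk with
      | (k+1), hk =>
        have hk' : ψ.md ≤ k := by simpa [ModalFormula.md] using hk
        constructor
        · rintro ⟨y, hay, hy⟩
          obtain ⟨u, hbu, hu⟩ := ty_transfer R V Bd h hay
          exact ⟨u, hbu, (ih hv k hk' u y hu).mpr hy⟩
        · rintro ⟨y, hby, hy⟩
          obtain ⟨u, hau, hu⟩ := ty_transfer R V Bd h.symm hby
          exact ⟨u, hau, (ih hv k hk' u y hu).mpr hy⟩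


variable (N : ℕ)

def Node : Type := Σ ℓ : Fin (N+1), Ty Bd ℓ.val

instance nodeFinite : Finite (Node Bd N) := by
  unfold Node; infer_instance

def Rel' : Node Bd N → Node Bd N → Prop := fun A B =>
  A.1.val = 0 ∨
    (A.1.val - 1 ≤ B.1.val ∧ ∃ x y w', R x y ∧
      ty R V Bd A.1.val x = A.2 ∧ ty R V Bd B.1.val w' = B.2 ∧
      ty R V Bd (A.1.val - 1) y = ty R V Bd (A.1.val - 1) w')

def Val' : ℕ → Set (Node Bd N) := fun p => { A | ∃ h : p < Bd, tyBase Bd A.1.val A.2 ⟨p, h⟩ }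

theorem truth (ψ : ModalFormula) (hv : ∀ p ∈ ψ.vars, p < Bd) :
    ∀ (ℓ : ℕ) (h1 : ℓ < N + 1), ψ.md ≤ ℓ → ∀ w : W,
      (Sat (Rel' R V Bd N) (Val' Bd N) ⟨⟨ℓ, h1⟩, ty R V Bd ℓ w⟩ ψ ↔ Sat R V w ψ) := by
  induction ψ with
  | bot => intro ℓ h1 hmd w; simp [Sat]
  | var p =>
      intro ℓ h1 hmd w
      have hp : p < Bd := hv p (by simp [ModalFormula.vars])
      simp only [Sat]
      constructor
      · rintro ⟨h, hb⟩
        exact (tyBase_ty R V Bd ℓ w ⟨p, h⟩).mp hb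
      · intro h
        exact ⟨hp, (tyBase_ty R V Bd ℓ w ⟨p, hp⟩).mpr h⟩
  | neg ψ ih =>
      intro ℓ h1 hmd w
      simp only [Sat]
      rw [ih hv ℓ h1 hmd w]
  | or ψ1 ψ2 ih1 ih2 =>
      intro ℓ h1 hmd w
      simp only [Sat]
      rw [ih1 (fun p hp => hv p (Or.inl hp)) ℓ h1 (le_trans (le_max_left _ _) hmd) w,
          ih2 (fun p hp => hv p (Or.inr hp)) ℓ h1 (le_trans (le_max_right _ _) hmd) w]
  | dia ψ ih =>
      intro ℓ h1 hmd w
      match ℓ, h1, hmd with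
      | (k+1), h1, hmd =>
        have hmd' : ψ.md ≤ k := by simpa [ModalFormula.md] using hmd
        constructor
        · rintro ⟨B, hAB, hB⟩
          rcases hAB with h0 | ⟨hle, x, y, w', hxy, hx, hw', hy⟩
          · exact absurd h0 (by simp)
          · obtain ⟨⟨ℓ', hℓ'⟩, τ'⟩ := B
            simp only at hle hw' hy hB
            subst hw'
            have hle' : k ≤ ℓ' := by simpa using hle
            have hsw' : Sat R V w' ψ := (ih hv ℓ' hℓ' (le_trans hmd' hle') w').mp hB
            have hyk : ty R V Bd k y = ty R V Bd k w' := by simpa using hy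
            have hsy : Sat R V y ψ :=
              (typeSat R V Bd ψ hv k hmd' y w' hyk).mpr hsw'
            have hsx : Sat R V x (ψ.dia) := ⟨y, hxy, hsy⟩
            exact (typeSat R V Bd (ψ.dia) hv (k+1) hmd x w hx).mp hsx
        · rintro ⟨y, hwy, hy⟩
          have hkN : k < N + 1 := by omega
          refine ⟨⟨⟨k, hkN⟩, ty R V Bd k y⟩, Or.inr ⟨by simp, w, y, y, hwy, rfl, rfl, rfl⟩, ?_⟩
          exact (ih hv k hkN hmd' y).mpr hy


lemma nodeEq {a a' : ℕ} (h : a = a') (ha : a < N+1) (ha' : a' < N+1) {w w' : W} (hw : w = w') :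
    (⟨⟨a, ha⟩, ty R V Bd a w⟩ : Node Bd N) = ⟨⟨a', ha'⟩, ty R V Bd a' w'⟩ := by
  subst h; subst hw; rfl

theorem phiFrame (Φ : Set (ℕ × ℕ)) (hΦ : ∀ mn ∈ Φ, 1 < mn.1 ∧ mn.1 < mn.2) (r : W)
    (hpath : ∀ mn ∈ Φ, ∀ x z : W, relPow R mn.1 x z →
      ∃ p : ℕ → W, p 0 = x ∧ p mn.2 = z ∧ ∀ j < mn.2, R (p j) (p (j+1))) :
    ∀ mn ∈ Φ, ∀ A C : Node Bd N,
      relPow (Rel' R V Bd N) mn.1 A C → relPow (Rel' R V Bd N) mn.2 A C := by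
  rintro ⟨m, n⟩ hmn A C hAC
  obtain ⟨hm1, hmn2⟩ := hΦ (m, n) hmn
  simp only at hm1 hmn2 ⊢
  obtain ⟨c, hc0, hcm, hce⟩ := path_of_relPow _ m A C hAC
  rw [← hc0, ← hcm]
  by_cases hfree : ∃ i, i ≤ m ∧ (c i).1.val = 0
  · obtain ⟨i, him, hi0⟩ := hfree
    exact relPow_pad him (by omega) hce (Or.inl hi0)
  · push_neg at hfree
    set ℓ₀ := (c 0).1.val with hℓ₀
    have hdata : ∀ j, ∃ x y w', j < m →
        R x y ∧ ty R V Bd (c j).1.val x = (c j).2 ∧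
        ty R V Bd (c (j+1)).1.val w' = (c (j+1)).2 ∧
        ty R V Bd ((c j).1.val - 1) y = ty R V Bd ((c j).1.val - 1) w' := by
      intro j
      by_cases hj : j < m
      · rcases hce j hj with h0 | ⟨_, x, y, w', hxy, hx, hw, hy⟩
        · exact absurd h0 (hfree j (by omega))
        · exact ⟨x, y, w', fun _ => ⟨hxy, hx, hw, hy⟩⟩
      · exact ⟨r, r, r, fun h => absurd h hj⟩
    choose X Y Wr hXYW using hdata
    have hle : ∀ j, j < m → (c j).1.val - 1 ≤ (c (j+1)).1.val := by
      intro j hj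
      rcases hce j hj with h0 | ⟨h, _⟩
      · exact absurd h0 (hfree j (by omega))
      · exact h
    have hlb : ∀ i, i ≤ m → ℓ₀ ≤ (c i).1.val + i := by
      intro i
      induction i with
      | zero => intro _; omega
      | succ i ih =>
          intro hi
          have h1 := hle i (by omega)
          have h2 := ih (by omega)
          omega
    have hreal : ∀ K, K ≤ m → K ≤ ℓ₀ → ∃ u : ℕ → W,
        (∀ j, j < K → R (u j) (u (j+1))) ∧
        ∀ i, i ≤ K → ∃ w'', ty R V Bd (c i).1.val w'' = (c i).2 ∧
          ty R V Bd (ℓ₀ - i) (u i) = ty R V Bd (ℓ₀ - i) w'' := by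
      intro K
      induction K with
      | zero =>
          intro _ _
          refine ⟨fun _ => X 0, fun j hj => absurd hj (by omega), ?_⟩
          intro i hi
          have hi0 : i = 0 := by omega
          subst hi0
          exact ⟨X 0, (hXYW 0 (by omega)).2.1, rfl⟩
      | succ K ih =>
          intro hKm hKl
          obtain ⟨u, hue, huP⟩ := ih (by omega) (by omega)
          obtain ⟨w'', hw1, hw2⟩ := huP K (le_refl _)
          obtain ⟨hRxy, hXty, hWty, hYty⟩ := hXYW K (by omega)
          have hlK : ℓ₀ - K ≤ (c K).1.val := by have := hlb K (by omega); omega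
          have h1 : ty R V Bd (ℓ₀ - K) (X K) = ty R V Bd (ℓ₀ - K) (u K) := by
            have hxe : ty R V Bd (c K).1.val w'' = ty R V Bd (c K).1.val (X K) :=
              hw1.trans hXty.symm
            exact (ty_mono R V Bd hlK hxe).symm.trans hw2.symm
          have hsub : ℓ₀ - K = (ℓ₀ - (K+1)) + 1 := by omega
          rw [hsub] at h1
          obtain ⟨v, hv, hvty⟩ := ty_transfer R V Bd h1 hRxy
          refine ⟨fun j => if j = K+1 then v else u j, ?_, ?_⟩
          · intro j hj
            by_cases hjK : j < K
            · show R (if j = K+1 then v else u j) (if j+1 = K+1 then v else u (j+1))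
              rw [if_neg (show ¬ j = K+1 by omega), if_neg (show ¬ j+1 = K+1 by omega)]
              exact hue j hjK
            · have hjK' : j = K := by omega
              show R (if j = K+1 then v else u j) (if j+1 = K+1 then v else u (j+1))
              rw [if_neg (show ¬ j = K+1 by omega), if_pos (show j+1 = K+1 by omega)]
              rw [hjK']
              exact hv
          · intro i hi
            by_cases hiK : i ≤ K
            · obtain ⟨w3, ha, hb⟩ := huP i hiK
              refine ⟨w3, ha, ?_⟩
              show ty R V Bd (ℓ₀ - i) (if i = K+1 then v else u i) = _
              rw [if_neg (show ¬ i = K+1 by omega)]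
              exact hb
            · have hiK' : i = K+1 := by omega
              subst hiK'
              refine ⟨Wr K, hWty, ?_⟩
              have hYW : ty R V Bd (ℓ₀ - (K+1)) (Y K) = ty R V Bd (ℓ₀ - (K+1)) (Wr K) :=
                ty_mono R V Bd (by have := hlb K (by omega); omega) hYty
              show ty R V Bd (ℓ₀ - (K+1)) (if K+1 = K+1 then v else u (K+1)) = _
              rw [if_pos rfl]
              exact hvty.trans hYW
    have hNlt : ∀ j : ℕ, ℓ₀ - j < N + 1 := fun j => by have := (c 0).1.isLt; omega
    have hn0 : ¬ n = 0 := by omega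
    have h10 : ¬ (1:ℕ) = 0 := by omega
    have h1n : ¬ (1:ℕ) = n := by omega
    by_cases hcase : m ≤ ℓ₀
    · -- realize the whole chain, lengthen via hpath, push with clamped levels
      obtain ⟨u, hue, huP⟩ := hreal m (le_refl _) hcase
      have hty0 : ty R V Bd ℓ₀ (u 0) = (c 0).2 := by
        obtain ⟨w'', ha, hb⟩ := huP 0 (by omega)
        have hb' : ty R V Bd ℓ₀ (u 0) = ty R V Bd ℓ₀ w'' := by simpa using hb
        exact hb'.trans ha
      have hrp : relPow R m (u 0) (u m) := relPow_of_path R m u (fun j hj => hue j hj)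
      obtain ⟨p, hp0, hpn, hpe⟩ := hpath (m, n) hmn (u 0) (u m) hrp
      simp only at hpn hpe
      set q : ℕ → Node Bd N := fun j =>
        if j = 0 then c 0 else if j = n then c m
        else ⟨⟨ℓ₀ - j, hNlt j⟩, ty R V Bd (ℓ₀ - j) (p j)⟩ with hq
      have hq0 : q 0 = c 0 := by simp [hq]
      have hqn : q n = c m := by simp [hq, hn0]
      have hqe : ∀ j, j < n → Rel' R V Bd N (q j) (q (j+1)) := by
        intro j hj
        by_cases hj0 : j = 0
        · subst hj0
          have hq1 : q 1 = ⟨⟨ℓ₀ - 1, hNlt 1⟩, ty R V Bd (ℓ₀ - 1) (p 1)⟩ := by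
            simp [hq, h10, h1n]; rfl
          rw [hq0, hq1]
          refine Or.inr ⟨le_refl _, p 0, p 1, p 1, hpe 0 (by omega), ?_, rfl, rfl⟩
          rw [hp0]; exact hty0
        · by_cases hjn : j + 1 = n
          · have hjn' : ¬ j = n := by omega
            have hqj : q j = ⟨⟨ℓ₀ - j, hNlt j⟩, ty R V Bd (ℓ₀ - j) (p j)⟩ := by
              simp [hq, hj0, hjn']; rfl
            have hqj1 : q (j+1) = c m := by
              have h' : ¬ j + 1 = 0 := by omega
              simp [hq, hjn, h', hn0]
            rw [hqj, hqj1]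
            by_cases hz : ℓ₀ - j = 0
            · exact Or.inl hz
            · have hlm := hlb m (le_refl _)
              refine Or.inr ⟨show ℓ₀ - j - 1 ≤ (c m).1.val by omega,
                p j, p (j+1), Wr (m-1), hpe j hj, rfl, ?_, ?_⟩
              · have hWm := (hXYW (m-1) (by omega)).2.2.1
                rwa [(show m - 1 + 1 = m by omega)] at hWm
              · obtain ⟨w'', ha, hb⟩ := huP m (le_refl _)
                have hWm := (hXYW (m-1) (by omega)).2.2.1
                rw [(show m - 1 + 1 = m by omega)] at hWm
                have e1 : ty R V Bd (ℓ₀ - j - 1) (u m) = ty R V Bd (ℓ₀ - j - 1) w'' :=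
                  ty_mono R V Bd (by omega) hb
                have e2 : ty R V Bd (ℓ₀ - j - 1) w'' = ty R V Bd (ℓ₀ - j - 1) (Wr (m-1)) :=
                  ty_mono R V Bd (by omega) (ha.trans hWm.symm)
                show ty R V Bd (ℓ₀ - j - 1) (p (j+1)) = ty R V Bd (ℓ₀ - j - 1) (Wr (m-1))
                rw [hjn, hpn]
                exact e1.trans e2
          · have hjn' : ¬ j = n := by omega
            have hj10 : ¬ j + 1 = 0 := by omega
            have hqj : q j = ⟨⟨ℓ₀ - j, hNlt j⟩, ty R V Bd (ℓ₀ - j) (p j)⟩ := by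
              simp [hq, hj0, hjn']; rfl
            have hqj1 : q (j+1) = ⟨⟨ℓ₀ - (j+1), hNlt (j+1)⟩, ty R V Bd (ℓ₀ - (j+1)) (p (j+1))⟩ := by
              simp [hq, hj10, hjn]; rfl
            rw [hqj, hqj1]
            by_cases hz : ℓ₀ - j = 0
            · exact Or.inl hz
            · exact Or.inr ⟨show ℓ₀ - j - 1 ≤ ℓ₀ - (j+1) by omega,
                p j, p (j+1), p (j+1), hpe j hj, rfl, rfl, rfl⟩
      have := relPow_of_path _ n q hqe
      rwa [hq0, hqn] at this
    · -- dive to the free bottom level, loop, exit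
      push_neg at hcase
      obtain ⟨u, hue, huP⟩ := hreal ℓ₀ (by omega) (le_refl _)
      have hpos0 : 1 ≤ ℓ₀ := by have := hfree 0 (by omega); omega
      have hty0 : ty R V Bd ℓ₀ (u 0) = (c 0).2 := by
        obtain ⟨w'', ha, hb⟩ := huP 0 (by omega)
        have hb' : ty R V Bd ℓ₀ (u 0) = ty R V Bd ℓ₀ w'' := by simpa using hb
        exact hb'.trans ha
      set q : ℕ → Node Bd N := fun j =>
        if j = 0 then c 0 else if j = n then c m
        else ⟨⟨ℓ₀ - min j ℓ₀, hNlt _⟩, ty R V Bd (ℓ₀ - min j ℓ₀) (u (min j ℓ₀))⟩ with hq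
      have hq0 : q 0 = c 0 := by simp [hq]
      have hqn : q n = c m := by simp [hq, hn0]
      have hqgen : ∀ j, ¬ j = 0 → ¬ j = n →
          q j = ⟨⟨ℓ₀ - min j ℓ₀, hNlt _⟩, ty R V Bd (ℓ₀ - min j ℓ₀) (u (min j ℓ₀))⟩ := by
        intro j hj0 hjn
        simp [hq, hj0, hjn]; rfl
      have hqe : ∀ j, j < n → Rel' R V Bd N (q j) (q (j+1)) := by
        intro j hj
        by_cases hj0 : j = 0
        · subst hj0
          have hmin : min 1 ℓ₀ = 1 := by omega
          have hq1 : q 1 = ⟨⟨ℓ₀ - 1, hNlt 1⟩, ty R V Bd (ℓ₀ - 1) (u 1)⟩ := by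
            rw [hqgen 1 h10 h1n]
            exact nodeEq R V Bd N (by omega) _ _ (by rw [hmin])
          rw [hq0, hq1]
          exact Or.inr ⟨le_refl _, u 0, u 1, u 1, hue 0 (by omega), hty0, rfl, rfl⟩
        · by_cases hjl : j < ℓ₀
          · have hjn : ¬ j + 1 = n := by omega
            have hjn' : ¬ j = n := by omega
            have hj10 : ¬ j + 1 = 0 := by omega
            have hqj : q j = ⟨⟨ℓ₀ - j, hNlt j⟩, ty R V Bd (ℓ₀ - j) (u j)⟩ := by
              rw [hqgen j hj0 hjn']
              exact nodeEq R V Bd N (by omega) _ _ (by rw [min_eq_left (by omega)])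
            have hqj1 : q (j+1) = ⟨⟨ℓ₀ - (j+1), hNlt (j+1)⟩, ty R V Bd (ℓ₀ - (j+1)) (u (j+1))⟩ := by
              rw [hqgen (j+1) hj10 hjn]
              exact nodeEq R V Bd N (by omega) _ _ (by rw [min_eq_left (by omega)])
            rw [hqj, hqj1]
            exact Or.inr ⟨show ℓ₀ - j - 1 ≤ ℓ₀ - (j+1) by omega,
              u j, u (j+1), u (j+1), hue j hjl, rfl, rfl, rfl⟩
          · have hjn' : ¬ j = n := by omega
            rw [hqgen j hj0 hjn']
            exact Or.inl (show ℓ₀ - min j ℓ₀ = 0 by omega)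
      have := relPow_of_path _ n q hqe
      rwa [hq0, hqn] at this

end FMPAux

/-- Filtration Lemma: if `φ` holds at the root of a rooted model satisfying conditions (1)
and (2), then `φ` is satisfiable in a finite `Φ`-frame model. -/
theorem statement2 (Φ : Set (ℕ × ℕ)) (hΦ : ∀ mn ∈ Φ, 1 < mn.1 ∧ mn.1 < mn.2)
    (φ : ModalFormula) {W : Type*} (R : W → W → Prop) (V : ℕ → Set W) (r : W)
    (hRoot : Rooted R r) (hSat : Sat R V r φ)
    (h1 : ∀ x y, R x y → ∃ y', R x y' ∧ depth R r y' = depth R r x + 1 ∧ Bisim R V R V y' y)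
    (h2 : ∀ mn ∈ Φ, ∀ x z, relPow R mn.1 x z → DepthPath R (depth R r) mn.2 x z) :
    ∃ (W' : Type) (R' : W' → W' → Prop) (V' : ℕ → Set W') (w' : W'),
      Finite W' ∧ PhiFrame R' Φ ∧ Sat R' V' w' φ := by
  classical
  set Bd := FMPAux.mv φ + 1 with hBd
  set N := φ.md with hN
  refine ⟨FMPAux.Node Bd N, FMPAux.Rel' R V Bd N, FMPAux.Val' Bd N,
    ⟨⟨N, by omega⟩, FMPAux.ty R V Bd N r⟩, ?_, ?_, ?_⟩
  · infer_instance
  · intro mn hmn x y hxy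
    refine FMPAux.phiFrame R V Bd N Φ hΦ r ?_ mn hmn x y hxy
    intro mn' hmn' a z haz
    obtain ⟨p, hp0, hpn, hpe, _⟩ := h2 mn' hmn' a z haz
    exact ⟨p, hp0, hpn, hpe⟩
  · exact (FMPAux.truth R V Bd N φ (FMPAux.mv_lt φ) N (by omega) (le_refl _) r).mpr hSat
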